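/- Let 0 < h < 2 and set c(h) = 2·arcsin(h/2) / (h·√(4 − h²)). Then the 2×2 real matrix exponential satisfies exp( h·c(h)·[[h, 2], [−2, −h]] ) = [[1, h], [−h, 1 − h²]]. That is, the symplectic Euler step for the harmonic oscillator is the exact time-h flow of the perturbed Hamiltonian H̃(q, p, h) = c(h)·(p² + h p q + q²), whose linear Hamiltonian vector field is c(h)·[[h, 2], [−2, −h]]. -/

import Mathlib

/-- For `0 < h < 2` and `c(h) = 2 arcsin(h/2) / (h √(4 - h²))`, the symplectic
Euler step `[[1, h], [-h, 1 - h²]]` for the harmonic oscillator is the exact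
time-`h` flow of the perturbed quadratic Hamiltonian
`H̃ = c(h) (p² + h p q + q²)`, whose linear vector field matrix is
`c(h)·[[h, 2], [-2, -h]]`. -/
theorem symplectic_euler_exact_flow_of_modified_hamiltonian
    (h : ℝ) (h0 : 0 < h) (h2 : h < 2)
    (c : ℝ) (hc : c = 2 * Real.arcsin (h / 2) / (h * Real.sqrt (4 - h ^ 2))) :
    NormedSpace.exp ((h * c) • (!![h, 2; -2, -h] : Matrix (Fin 2) (Fin 2) ℝ)) =
      !![1, h; -h, 1 - h ^ 2] := by
  have h4 : (0:ℝ) < 4 - h ^ 2 := by nlinarith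
  set ω : ℝ := Real.sqrt (4 - h ^ 2) with hωdef
  have hω2 : ω ^ 2 = 4 - h ^ 2 := Real.sq_sqrt h4.le
  have hωpos : 0 < ω := Real.sqrt_pos.mpr h4
  set A : Matrix (Fin 2) (Fin 2) ℝ := !![h, 2; -2, -h] with hAdef
  set B : Matrix (Fin 2) (Fin 2) ℝ := ω⁻¹ • A with hBdef
  have hB : B * B = -1 := by
    ext i j
    fin_cases i <;> fin_cases j <;>
      simp [hBdef, hAdef, Matrix.mul_apply, Fin.sum_univ_succ, Matrix.one_apply] <;>
      field_simp <;> nlinarith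
  set θ : ℝ := 2 * Real.arcsin (h / 2) with hθdef
  set φ : ℂ →ₐ[ℝ] Matrix (Fin 2) (Fin 2) ℝ := Complex.liftAux B hB with hφdef
  have hφcont : Continuous φ := φ.toLinearMap.continuous_of_finiteDimensional
  have key : (h * c) • A = φ ((θ : ℂ) * Complex.I) := by
    rw [hφdef, Complex.liftAux_apply]
    have : ((θ : ℂ) * Complex.I).re = 0 := by simp
    rw [this]
    have : ((θ : ℂ) * Complex.I).im = θ := by simp
    rw [this]
    simp only [map_zero, zero_add, hBdef, smul_smul]
    congr 1
    rw [hc]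
    field_simp
  letI : SeminormedRing (Matrix (Fin 2) (Fin 2) ℝ) := Matrix.linftyOpSemiNormedRing
  letI : NormedRing (Matrix (Fin 2) (Fin 2) ℝ) := Matrix.linftyOpNormedRing
  letI : NormedAlgebra ℝ (Matrix (Fin 2) (Fin 2) ℝ) := Matrix.linftyOpNormedAlgebra
  rw [key]; refine (NormedSpace.map_exp φ hφcont _).symm.trans ?_
  have hexp : NormedSpace.exp ((θ : ℂ) * Complex.I) = Complex.exp ((θ : ℂ) * Complex.I) := by
    rw [Complex.exp_eq_exp_ℂ]
  rw [hexp, Complex.exp_mul_I]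
  -- cos θ and sin θ values
  have harc : Real.sin (Real.arcsin (h / 2)) = h / 2 :=
    Real.sin_arcsin (by linarith) (by linarith)
  have hcosarc : Real.cos (Real.arcsin (h / 2)) = Real.sqrt (1 - (h / 2) ^ 2) :=
    Real.cos_arcsin _
  have hcos : Real.cos θ = 1 - h ^ 2 / 2 := by
    rw [hθdef, Real.cos_two_mul, hcosarc, Real.sq_sqrt (by nlinarith)]
    ring
  have hsin : Real.sin θ = h / 2 * ω := by
    rw [hθdef, Real.sin_two_mul, harc, hcosarc]
    have : Real.sqrt (1 - (h / 2) ^ 2) = ω / 2 := by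
      have h44 : Real.sqrt 4 = 2 := by
        rw [show (4:ℝ) = 2^2 by norm_num, Real.sqrt_sq (by norm_num : (0:ℝ) ≤ 2)]
      rw [hωdef, show (1 - (h/2)^2 : ℝ) = (4 - h^2) / 4 by ring,
        Real.sqrt_div h4.le, h44]
    rw [this]; ring
  have hφval : φ ((Real.cos θ : ℂ) + (Real.sin θ : ℂ) * Complex.I) =
      (Real.cos θ) • (1 : Matrix (Fin 2) (Fin 2) ℝ) + (Real.sin θ) • B := by
    rw [hφdef, Complex.liftAux_apply]
    have h1 : ((Real.cos θ : ℂ) + (Real.sin θ : ℂ) * Complex.I).re = Real.cos θ := by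
      simp [Complex.cos_ofReal_re]
    have h2 : ((Real.cos θ : ℂ) + (Real.sin θ : ℂ) * Complex.I).im = Real.sin θ := by
      simp [Complex.sin_ofReal_re]
    rw [h1, h2, Algebra.algebraMap_eq_smul_one]
  rw [← Complex.ofReal_cos, ← Complex.ofReal_sin, hφval, hcos, hsin]
  have hsB : (h / 2 * ω) • B = (h / 2) • A := by
    rw [hBdef, smul_smul]
    congr 1
    field_simp
  rw [hsB]
  ext i j
  fin_cases i <;> fin_cases j <;>
    simp [hAdef, Matrix.one_apply] <;> ring
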